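/- Let ε ∈ (0, 1/2], σ ≥ 1, N ≥ 4 even. Set x_i = -σε ln(1 - 2(1-ε)i/N) for 0 ≤ i ≤ N/2 and h_i = x_{i+1} - x_i. Then for 0 ≤ i ≤ N/2-2, h_i^{k+1} ε^{-(k+1)} e^{-x_i/ε} ≤ C N^{-(k+1)} holds for any integer k ≥ 0 with k+1 ≤ σ, with a constant C depending only on σ and k. -/

import Mathlib

/-- Key interpolation estimate on the fine part of the Bakhvalov-type mesh:
for `0 ≤ i ≤ N/2 - 2`, `h_i^{k+1} ε^{-(k+1)} e^{-x_i/ε} ≤ C N^{-(k+1)}` with `C`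
depending only on `σ` and `k`. -/
theorem stmt_11 (σ : ℝ) (k : ℕ) (hσ : 1 ≤ σ) (hkσ : (k : ℝ) + 1 ≤ σ) :
    ∃ C > 0, ∀ (ε : ℝ) (N : ℕ) (x : ℕ → ℝ),
      0 < ε → ε ≤ 1/2 → 4 ≤ N → Even N →
      (∀ i ≤ N / 2, x i = -σ * ε * Real.log (1 - 2 * (1 - ε) * i / N)) →
      ∀ i ≤ N / 2 - 2,
        (x (i + 1) - x i) ^ (k + 1) * (ε⁻¹) ^ (k + 1) * Real.exp (-x i / ε) ≤
          C * ((N : ℝ) ^ (k + 1))⁻¹ := by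
  have hσ0 : (0:ℝ) < σ := by linarith
  refine ⟨(4*σ)^(k+1), by positivity, ?_⟩
  intro ε N x hε hε2 hN4 hNe hx i hi
  have hε1 : ε < 1 := by linarith
  have h1ε : (0:ℝ) ≤ 1 - ε := by linarith
  obtain ⟨m, hm⟩ := hNe
  have hi2 : i + 2 ≤ m := by omega
  have hNpos : (0:ℝ) < N := by
    have : (0:ℕ) < N := by omega
    exact_mod_cast this
  set s : ℕ → ℝ := fun j => 1 - 2 * (1 - ε) * j / N with hs
  have hxj : ∀ j, j ≤ m → x j = -σ * ε * Real.log (s j) := by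
    intro j hj
    exact hx j (by omega)
  set a : ℝ := 2 * (1 - ε) / N with ha
  have ha0 : 0 ≤ a := by
    apply div_nonneg _ hNpos.le
    nlinarith
  have haN : a ≤ 2 / N := by
    rw [ha, div_le_div_iff₀ hNpos hNpos]
    nlinarith
  have hstep : s i = s (i+1) + a := by
    simp only [hs, ha]
    push_cast
    field_simp
    ring
  have hiM : ((i:ℝ) + 2) * 2 ≤ N := by
    have : (i+2)*2 ≤ N := by omega
    exact_mod_cast this
  have hεa : ε + a ≤ s (i+1) := by
    have key : (1-ε) * (((i:ℝ)+2)*2) ≤ (1-ε) * N := mul_le_mul_of_nonneg_left hiM h1ε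
    have h2 : s (i+1) - (ε + a) = ((1-ε)*N - (1-ε)*(((i:ℝ)+2)*2)) / N := by
      simp only [hs, ha]; push_cast; field_simp; ring
    have h3 : 0 ≤ s (i+1) - (ε + a) := by
      rw [h2]; exact div_nonneg (by linarith) hNpos.le
    linarith
  have hs1pos : 0 < s (i+1) := by linarith
  have hsipos : 0 < s i := by rw [hstep]; linarith
  have hsi1 : s i ≤ 1 := by
    simp only [hs]
    have : 0 ≤ 2 * (1-ε) * (i:ℝ) / N :=
      div_nonneg (by positivity) hNpos.le
    linarith
  have hsi2 : s i ≤ 2 * s (i+1) := by rw [hstep]; linarith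
  -- bound on the log difference
  have hL : Real.log (s i) - Real.log (s (i+1)) ≤ a / s (i+1) := by
    rw [← Real.log_div hsipos.ne' hs1pos.ne']
    have h1 : 0 < s i / s (i+1) := by positivity
    have := Real.log_le_sub_one_of_pos h1
    have h2 : s i / s (i+1) - 1 = a / s (i+1) := by
      rw [hstep]; field_simp; ring
    linarith
  have hL0 : 0 ≤ Real.log (s i) - Real.log (s (i+1)) := by
    have : Real.log (s (i+1)) ≤ Real.log (s i) :=
      Real.log_le_log hs1pos (by rw [hstep]; linarith)
    linarith
  have hxi : x i = -σ * ε * Real.log (s i) := hxj i (by omega)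
  have hxi1 : x (i+1) = -σ * ε * Real.log (s (i+1)) := hxj (i+1) (by omega)
  have hdiff : x (i+1) - x i = σ * ε * (Real.log (s i) - Real.log (s (i+1))) := by
    rw [hxi, hxi1]; ring
  have hh0 : 0 ≤ x (i+1) - x i := by
    rw [hdiff]; positivity
  have hh : x (i+1) - x i ≤ σ * ε * (a / s (i+1)) := by
    rw [hdiff]
    exact mul_le_mul_of_nonneg_left hL (by positivity)
  have hexp : Real.exp (-x i / ε) = s i ^ σ := by
    rw [hxi, Real.rpow_def_of_pos hsipos]
    congr 1
    field_simp
  have hrpow : Real.exp (-x i / ε) ≤ s i ^ (k+1) := by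
    rw [hexp]
    have h1 : s i ^ σ ≤ s i ^ (((k:ℕ)+1 : ℕ) : ℝ) := by
      apply Real.rpow_le_rpow_of_exponent_ge hsipos hsi1
      push_cast; linarith
    rwa [Real.rpow_natCast] at h1
  calc (x (i + 1) - x i) ^ (k + 1) * (ε⁻¹) ^ (k + 1) * Real.exp (-x i / ε)
      ≤ (σ * ε * (a / s (i+1))) ^ (k + 1) * (ε⁻¹) ^ (k + 1) * (s i) ^ (k+1) := by
        gcongr
    _ = (σ * a * s i / s (i+1)) ^ (k+1) := by
        rw [← mul_pow, ← mul_pow]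
        congr 1
        field_simp
    _ ≤ (4 * σ / N) ^ (k+1) := by
        apply pow_le_pow_left₀ (by positivity)
        rw [div_le_div_iff₀ hs1pos hNpos]
        have haN2 : a * N ≤ 2 := (le_div_iff₀ hNpos).mp haN
        nlinarith [mul_le_mul_of_nonneg_right haN2 (mul_nonneg hσ0.le hsipos.le),
          mul_le_mul_of_nonneg_left hsi2 hσ0.le]
    _ = (4*σ)^(k+1) * ((N : ℝ) ^ (k + 1))⁻¹ := by
        rw [div_pow, div_eq_mul_inv]
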